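/- Let G be a finite non-solvable group in which every element y of order 3 satisfies C_G(y) = ⟨y⟩ (elements of order 3 are self-centralizing), and let x ∈ G be such that the subgroup generated by nil_G(x) is a maximal subgroup of G. Then the cardinality of nil_G(x) is not equal to 6. -/

import Mathlib

/-- The nilpotentizer of `x` in `G`: the set of `y` such that `⟨x, y⟩` is nilpotent. -/
def nilpotentizer {G : Type*} [Group G] (x : G) : Set G :=
  {y | Group.IsNilpotent (Subgroup.closure ({x, y} : Set G))}

section Aux

open Subgroup

variable {G : Type*} [Group G]

lemma aux_nilpotent_of_forall_commute (H : Subgroup G)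
    (h : ∀ a b : H, a * b = b * a) : Group.IsNilpotent H := by
  refine ⟨⟨1, ?_⟩⟩
  rw [Subgroup.upperCentralSeries_one, eq_top_iff]
  intro g _
  exact Subgroup.mem_center_iff.mpr fun b => h b g

lemma aux_closure_pair_nilpotent {x y : G} (hxy : Commute x y) :
    Group.IsNilpotent (Subgroup.closure ({x, y} : Set G)) := by
  have h1 : Subgroup.closure ({x, y} : Set G) ≤ Subgroup.centralizer {x, y} := by
    rw [Subgroup.closure_le]
    rintro z (rfl | rfl) <;> rw [SetLike.mem_coe, Subgroup.mem_centralizer_iff] <;>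
      rintro w (rfl | rfl)
    · rfl
    · exact hxy.symm
    · exact hxy
    · rfl
  refine aux_nilpotent_of_forall_commute _ fun a b => ?_
  have hb := h1 b.2
  rw [Subgroup.mem_centralizer_iff] at hb
  have h2 : Subgroup.closure ({x, y} : Set G) ≤ Subgroup.centralizer {(b : G)} := by
    rw [Subgroup.closure_le]
    rintro z (rfl | rfl) <;> rw [SetLike.mem_coe, Subgroup.mem_centralizer_iff] <;>
      rintro w rfl
    · exact (hb z (by simp)).symm
    · exact (hb z (by simp)).symm
  have ha := h2 a.2
  rw [Subgroup.mem_centralizer_iff] at ha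
  exact Subtype.ext (ha (b : G) rfl).symm

lemma aux_commute_mem_nilpotentizer {x y : G} (hxy : Commute x y) :
    y ∈ nilpotentizer x :=
  aux_closure_pair_nilpotent hxy

lemma aux_nilpotent_of_le {H K : Subgroup G} (hHK : H ≤ K)
    (hK : Group.IsNilpotent K) : Group.IsNilpotent H := by
  haveI := hK
  exact nilpotent_of_mulEquiv (Subgroup.subgroupOfEquivOfLe hHK)

lemma aux_closure_subset_nilpotentizer {x y : G} (hy : y ∈ nilpotentizer x) :
    (Subgroup.closure ({x, y} : Set G) : Set G) ⊆ nilpotentizer x := by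
  intro h hh
  have hle : Subgroup.closure ({x, h} : Set G) ≤ Subgroup.closure ({x, y} : Set G) := by
    rw [Subgroup.closure_le]
    rintro z (rfl | rfl)
    · exact Subgroup.subset_closure (by simp)
    · exact hh
  exact aux_nilpotent_of_le hle hy

lemma aux_center_bot {H : Type*} [Group H] (hn : Group.IsNilpotent H)
    (hc : Subgroup.center H = ⊥) (g : H) : g = 1 := by
  obtain ⟨n, hn⟩ := hn.nilpotent
  have key : ∀ m, Subgroup.upperCentralSeries H m = ⊥ := by
    intro m
    induction m with
    | zero => exact Subgroup.upperCentralSeries_zero H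
    | succ m ih =>
      rw [eq_bot_iff]
      intro a ha
      rw [Subgroup.mem_upperCentralSeries_succ_iff] at ha
      have hcen : a ∈ Subgroup.center H := by
        rw [Subgroup.mem_center_iff]
        intro b
        have hb := ha b
        rw [ih, Subgroup.mem_bot] at hb
        have h3 : a * b * a⁻¹ = b := by rwa [commutatorElement_def, mul_inv_eq_one] at hb
        calc b * a = a * b * a⁻¹ * a := by rw [h3]
          _ = a * b := by group
      rw [hc, Subgroup.mem_bot] at hcen
      simp [hcen]
  have hbt : (⊥ : Subgroup H) = ⊤ := (key n) ▸ hn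
  have : g ∈ (⊥ : Subgroup H) := hbt ▸ Subgroup.mem_top g
  simpa using this

/-- Lemma A: a nilpotent subgroup containing a self-centralizing element `z`
of order 3 is contained in `⟨z⟩`. -/
lemma aux_le_zpowers [Finite G] {z : G} (hz3 : orderOf z = 3)
    (hselfz : Subgroup.centralizer {z} = Subgroup.zpowers z)
    (H : Subgroup G) (hH : Group.IsNilpotent H) (hz : z ∈ H) :
    H ≤ Subgroup.zpowers z := by
  have hz1 : z ≠ 1 := by
    intro h; rw [h, orderOf_one] at hz3; norm_num at hz3
  -- the center of H is nontrivial
  rcases Subgroup.bot_or_exists_ne_one (Subgroup.center H) with hbot | ⟨c, hc, hc1⟩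
  · exact absurd (congrArg Subtype.val (aux_center_bot hH hbot ⟨z, hz⟩)) hz1
  -- c is a nontrivial central element of H
  obtain ⟨c, hcmem⟩ := c
  have hccomm : ∀ w : G, w ∈ H → Commute w (c : G) := by
    intro w hw
    have := (Subgroup.mem_center_iff.mp hc) ⟨w, hw⟩
    exact congrArg Subtype.val this
  have hcz : (c : G) ∈ Subgroup.zpowers z := by
    rw [← hselfz, Subgroup.mem_centralizer_iff]
    intro w hw
    rw [Set.mem_singleton_iff] at hw
    subst hw
    exact hccomm w hz
  have hc1' : (c : G) ≠ 1 := fun h => hc1 (Subtype.ext h)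
  -- orderOf c = 3
  have hdvd : orderOf (c : G) ∣ 3 := by
    have := Subgroup.orderOf_dvd_natCard (Subgroup.zpowers z) hcz
    rwa [Nat.card_zpowers, hz3] at this
  have hco : orderOf (c : G) = 3 := by
    rcases (Nat.Prime.eq_one_or_self_of_dvd (by norm_num) _ hdvd) with h | h
    · exact absurd (orderOf_eq_one_iff.mp h) hc1'
    · exact h
  -- zpowers c = zpowers z
  have heq : Subgroup.zpowers (c : G) = Subgroup.zpowers z := by
    apply Subgroup.eq_of_le_of_card_ge (Subgroup.zpowers_le.mpr hcz)
    rw [Nat.card_zpowers, Nat.card_zpowers, hz3, hco]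
  intro w hw
  have hzc : z ∈ Subgroup.zpowers (c : G) := heq ▸ Subgroup.mem_zpowers z
  obtain ⟨k, hk⟩ := hzc
  have hwz : Commute z w := by
    have hk' : (c : G) ^ k = z := hk
    rw [← hk']
    exact ((hccomm w hw).zpow_right k).symm
  rw [← hselfz, Subgroup.mem_centralizer_iff]
  intro v hv
  rw [Set.mem_singleton_iff] at hv
  subst hv
  exact hwz

end Aux

theorem stmt_17 {G : Type*} [Group G] [Finite G] (hG : ¬ IsSolvable G)
    (hself : ∀ y : G, orderOf y = 3 → Subgroup.centralizer {y} = Subgroup.zpowers y)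
    (x : G) (hmax : IsCoatom (Subgroup.closure (nilpotentizer x))) :
    Nat.card (nilpotentizer x) ≠ 6 := by
  intro hcard
  set N := nilpotentizer x with hN
  -- cardinality bound for subgroups inside N
  have hsub : ∀ K : Subgroup G, (K : Set G) ⊆ N → Nat.card K ≤ 6 := by
    intro K hK
    rw [← hcard]
    exact Nat.card_le_card_of_injective (Set.inclusion hK) (Set.inclusion_injective hK)
  have memCen : ∀ z g : G, Commute z g → g ∈ Subgroup.centralizer ({z} : Set G) := by
    intro z g hg
    rw [Subgroup.mem_centralizer_iff]
    intro h hh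
    rw [Set.mem_singleton_iff] at hh
    subst hh
    exact hg
  have hzpN : (Subgroup.zpowers x : Set G) ⊆ N := by
    intro g hg
    obtain ⟨k, hk⟩ := hg
    exact aux_commute_mem_nilpotentizer (hk ▸ (Commute.refl x).zpow_right k)
  set n := orderOf x with hn
  have hn6 : n ≤ 6 := by
    have := hsub _ hzpN
    rwa [Nat.card_zpowers] at this
  have hn0 : 0 < n := orderOf_pos x
  -- if x is in a nilpotent subgroup of order divisible by 3, then n ∣ 3
  have key3 : ∀ K : Subgroup G, x ∈ K → Group.IsNilpotent K → 3 ∣ Nat.card K → n ∣ 3 := by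
    intro K hxK hKnil h3
    haveI := Fintype.ofFinite K
    haveI : Fact (Nat.Prime 3) := ⟨by norm_num⟩
    obtain ⟨z, hz3⟩ := exists_prime_orderOf_dvd_card (G := K) 3
      (by rwa [← Nat.card_eq_fintype_card])
    have hz3' : orderOf (z : G) = 3 := by rw [Subgroup.orderOf_coe, hz3]
    have hle := aux_le_zpowers hz3' (hself _ hz3') K hKnil z.2
    have := Subgroup.orderOf_dvd_natCard _ (hle hxK)
    rwa [Nat.card_zpowers, hz3'] at this
  -- basic facts about the closures
  have hclos : ∀ y ∈ N, x ∈ Subgroup.closure ({x, y} : Set G) ∧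
      Group.IsNilpotent (Subgroup.closure ({x, y} : Set G)) ∧
      n ∣ Nat.card (Subgroup.closure ({x, y} : Set G)) ∧
      Nat.card (Subgroup.closure ({x, y} : Set G)) ≤ 6 := by
    intro y hy
    have hxmem : x ∈ Subgroup.closure ({x, y} : Set G) :=
      Subgroup.subset_closure (by simp)
    exact ⟨hxmem, hy, Subgroup.orderOf_dvd_natCard _ hxmem,
      hsub _ (aux_closure_subset_nilpotentizer hy)⟩
  -- rule out each possible order of x
  interval_cases n
  -- n = 1
  · have hx1 : x = 1 := orderOf_eq_one_iff.mp hn.symm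
    have hNuniv : N = Set.univ := by
      rw [Set.eq_univ_iff_forall]
      intro y
      exact aux_commute_mem_nilpotentizer (hx1 ▸ Commute.one_left y)
    exact hmax.1 (by rw [hNuniv, Subgroup.closure_univ])
  -- n = 2
  · set C := Subgroup.centralizer ({x} : Set G) with hC
    have hCN : (C : Set G) ⊆ N := by
      intro y hy
      rw [SetLike.mem_coe, Subgroup.mem_centralizer_iff] at hy
      exact aux_commute_mem_nilpotentizer (hy x rfl)
    have hxC : x ∈ C := memCen x x (Commute.refl x)
    have hC6 : Nat.card C ≤ 6 := hsub _ hCN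
    have hC2 : 2 ∣ Nat.card C := hn ▸ Subgroup.orderOf_dvd_natCard _ hxC
    have hC3 : ¬ 3 ∣ Nat.card C := by
      intro h3
      haveI := Fintype.ofFinite C
      haveI : Fact (Nat.Prime 3) := ⟨by norm_num⟩
      obtain ⟨z, hz3⟩ := exists_prime_orderOf_dvd_card (G := C) 3
        (by rwa [← Nat.card_eq_fintype_card])
      have hz3' : orderOf (z : G) = 3 := by rw [Subgroup.orderOf_coe, hz3]
      have hzx : Commute x (z : G) := by
        have := z.2
        rw [Subgroup.mem_centralizer_iff] at this
        exact this x rfl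
      have hxz : x ∈ Subgroup.zpowers (z : G) := by
        rw [← hself _ hz3']
        exact memCen _ _ hzx.symm
      have := Subgroup.orderOf_dvd_natCard _ hxz
      rw [Nat.card_zpowers, hz3', ← hn] at this
      omega
    -- C has card 2 or 4, so there is y ∈ N \ C
    have hCpos : 0 < Nat.card C := Nat.card_pos
    have hCle : Nat.card C ≤ 4 := by omega
    have hNnotC : ¬ N ⊆ (C : Set G) := by
      intro hsubset
      have : Nat.card N ≤ Nat.card C :=
        Nat.card_le_card_of_injective (Set.inclusion hsubset) (Set.inclusion_injective hsubset)
      omega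
    obtain ⟨y, hyN, hyC⟩ := Set.not_subset.mp hNnotC
    obtain ⟨hxK, hKnil, hKdvd, hK6⟩ := hclos y hyN
    set K := Subgroup.closure ({x, y} : Set G) with hKdef
    have hK3 : ¬ 3 ∣ Nat.card K := by
      intro h3
      have := key3 K hxK hKnil h3
      omega
    have hKpos : 0 < Nat.card K := Nat.card_pos
    have hyK : y ∈ K := Subgroup.subset_closure (by simp)
    have hK24 : Nat.card K = 2 ∨ Nat.card K = 4 := by omega
    rcases hK24 with h | h
    · -- K = zpowers x, so y commutes with x : contradiction
      have : Subgroup.zpowers x = K := by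
        apply Subgroup.eq_of_le_of_card_ge (Subgroup.zpowers_le.mpr hxK)
        rw [Nat.card_zpowers, ← hn, h]
      have hy2 : y ∈ Subgroup.zpowers x := this ▸ hyK
      obtain ⟨k, hk⟩ := hy2
      exact hyC (memCen x y (hk ▸ (Commute.refl x).zpow_right k))
    · -- K has order 4, hence abelian, so y commutes with x : contradiction
      haveI : Fact (Nat.Prime 2) := ⟨by norm_num⟩
      have hcomm := IsPGroup.commutative_of_card_eq_prime_sq (p := 2) (G := K)
        (by rw [h]; norm_num)
      have : Commute x y := by
        have := hcomm ⟨x, hxK⟩ ⟨y, hyK⟩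
        exact congrArg Subtype.val this
      exact hyC (memCen x y this)
  -- n = 3
  · have hx3 : orderOf x = 3 := hn.symm
    have hNzp : N ⊆ (Subgroup.zpowers x : Set G) := by
      intro y hy
      obtain ⟨hxK, hKnil, -, -⟩ := hclos y hy
      exact aux_le_zpowers hx3 (hself _ hx3) _ hKnil hxK
        (Subgroup.subset_closure (by simp) : y ∈ _)
    have : Nat.card N ≤ Nat.card (Subgroup.zpowers x) :=
      Nat.card_le_card_of_injective (Set.inclusion hNzp) (Set.inclusion_injective hNzp)
    rw [hcard, Nat.card_zpowers, ← hn] at this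
    omega
  -- n = 4
  · have hNzp : N ⊆ (Subgroup.zpowers x : Set G) := by
      intro y hy
      obtain ⟨hxK, hKnil, hKdvd, hK6⟩ := hclos y hy
      have hK3 : ¬ 3 ∣ Nat.card (Subgroup.closure ({x, y} : Set G)) := by
        intro h3
        have := key3 _ hxK hKnil h3
        omega
      have hKpos : 0 < Nat.card (Subgroup.closure ({x, y} : Set G)) := Nat.card_pos
      have h4 : Nat.card (Subgroup.closure ({x, y} : Set G)) = 4 := by omega
      have : Subgroup.zpowers x = Subgroup.closure ({x, y} : Set G) := by
        apply Subgroup.eq_of_le_of_card_ge (Subgroup.zpowers_le.mpr hxK)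
        rw [Nat.card_zpowers, ← hn, h4]
      exact this ▸ (Subgroup.subset_closure (by simp) : y ∈ _)
    have : Nat.card N ≤ Nat.card (Subgroup.zpowers x) :=
      Nat.card_le_card_of_injective (Set.inclusion hNzp) (Set.inclusion_injective hNzp)
    rw [hcard, Nat.card_zpowers, ← hn] at this
    omega
  -- n = 5
  · have hNzp : N ⊆ (Subgroup.zpowers x : Set G) := by
      intro y hy
      obtain ⟨hxK, hKnil, hKdvd, hK6⟩ := hclos y hy
      have hKpos : 0 < Nat.card (Subgroup.closure ({x, y} : Set G)) := Nat.card_pos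
      have h5 : Nat.card (Subgroup.closure ({x, y} : Set G)) = 5 := by omega
      have : Subgroup.zpowers x = Subgroup.closure ({x, y} : Set G) := by
        apply Subgroup.eq_of_le_of_card_ge (Subgroup.zpowers_le.mpr hxK)
        rw [Nat.card_zpowers, ← hn, h5]
      exact this ▸ (Subgroup.subset_closure (by simp) : y ∈ _)
    have : Nat.card N ≤ Nat.card (Subgroup.zpowers x) :=
      Nat.card_le_card_of_injective (Set.inclusion hNzp) (Set.inclusion_injective hNzp)
    rw [hcard, Nat.card_zpowers, ← hn] at this
    omega
  -- n = 6
  · have hz3 : orderOf (x ^ 2) = 3 := by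
      rw [orderOf_pow, ← hn]
      norm_num
    have hxz : x ∈ Subgroup.zpowers (x ^ 2) := by
      rw [← hself _ hz3]
      exact memCen _ _ ((Commute.refl x).pow_left 2)
    have := Subgroup.orderOf_dvd_natCard _ hxz
    rw [Nat.card_zpowers, hz3, ← hn] at this
    omega
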